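/- For every real P > 0 and every integer J ≥ 2, one has the strict inequality (1 + J·P)^(J−1) < (1 + (J−1)·P)^J; equivalently, ℓ(1) < 0, where ℓ(β) = (1/2)·log(1 + J·P·β) − (J/(2(J−1)))·log(1 + P·β·(J−β)). -/
import Mathlib


/-- The function `ℓ(β) = (1/2)·log(1 + J·P·β) − (J/(2(J−1)))·log(1 + P·β·(J−β))`. -/
noncomputable def ell (J : ℕ) (P : ℝ) (β : ℝ) : ℝ :=
  (1 / 2) * Real.log (1 + (J : ℝ) * P * β)
    - ((J : ℝ) / (2 * ((J : ℝ) - 1))) * Real.log (1 + P * β * ((J : ℝ) - β))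

lemma aux_pow (P : ℝ) (hP : 0 < P) : ∀ n : ℕ, 1 ≤ n →
    (1 + ((n : ℝ) + 1) * P) ^ n < (1 + (n : ℝ) * P) ^ (n + 1) := by
  intro n
  induction n with
  | zero => intro h; omega
  | succ n ih =>
    intro _
    rcases Nat.eq_zero_or_pos n with h0 | h1
    · subst h0
      push_cast
      norm_num
      nlinarith
    · have IH := ih h1
      have hn : (0 : ℝ) ≤ (n : ℝ) := Nat.cast_nonneg n
      set a : ℝ := 1 + (n : ℝ) * P with ha_def
      set b : ℝ := 1 + ((n : ℝ) + 1) * P with hb_def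
      set c : ℝ := 1 + ((n : ℝ) + 2) * P with hc_def
      have ha : 0 < a := by nlinarith
      have hb : 0 < b := by nlinarith
      have hc : 0 < c := by nlinarith
      have hkey : c * a < b ^ 2 := by
        simp only [ha_def, hb_def, hc_def]; nlinarith
      have h2 : c ^ (n + 1) * a ^ (n + 1) < (b ^ 2) ^ (n + 1) := by
        rw [← mul_pow]
        exact pow_lt_pow_left₀ hkey (by positivity) (by omega)
      have h3 : c ^ (n + 1) * b ^ n < b ^ (n + 2) * b ^ n := by
        calc c ^ (n + 1) * b ^ n < c ^ (n + 1) * a ^ (n + 1) := by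
              exact mul_lt_mul_of_pos_left IH (by positivity)
          _ < (b ^ 2) ^ (n + 1) := h2
          _ = b ^ (n + 2) * b ^ n := by
              rw [← pow_mul, ← pow_add]; congr 1; omega
      have h4 : c ^ (n + 1) < b ^ (n + 2) :=
        lt_of_mul_lt_mul_right h3 (by positivity)
      have e2 : (1 + (((n : ℕ) + 1 : ℕ) : ℝ) * P) ^ (n + 1 + 1)
          = b ^ (n + 2) := by push_cast [hb_def]; ring
      have e1 : (1 + ((((n : ℕ) + 1 : ℕ) : ℝ) + 1) * P) ^ (n + 1)
          = c ^ (n + 1) := by push_cast [hc_def]; ring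
      rw [e1, e2]
      exact h4

/-- For every real `P > 0` and every integer `J ≥ 2`, one has
`(1 + J·P)^(J−1) < (1 + (J−1)·P)^J`; equivalently, `ℓ(1) < 0`. -/
theorem stmt_2 (P : ℝ) (hP : 0 < P) (J : ℕ) (hJ : 2 ≤ J) :
    (1 + (J : ℝ) * P) ^ (J - 1) < (1 + ((J : ℝ) - 1) * P) ^ J ∧ ell J P 1 < 0 := by
  obtain ⟨n, hn, rfl⟩ : ∃ n, 1 ≤ n ∧ J = n + 1 := ⟨J - 1, by omega, by omega⟩
  have hpow := aux_pow P hP n hn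
  have hn' : (0 : ℝ) < (n : ℝ) := by exact_mod_cast hn
  set x : ℝ := 1 + ((n : ℝ) + 1) * P with hx_def
  set y : ℝ := 1 + (n : ℝ) * P with hy_def
  have hx : 0 < x := by nlinarith
  have hy : 0 < y := by nlinarith
  have ea : (1 + ((n + 1 : ℕ) : ℝ) * P) = x := by push_cast [hx_def]; ring
  have eb : (1 + (((n + 1 : ℕ) : ℝ) - 1) * P) = y := by push_cast [hy_def]; ring
  constructor
  · rw [Nat.add_sub_cancel, ea, eb]
    exact hpow
  · have hlog : Real.log (x ^ n) < Real.log (y ^ (n + 1)) :=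
      Real.log_lt_log (pow_pos hx n) hpow
    rw [Real.log_pow, Real.log_pow] at hlog
    push_cast at hlog
    unfold ell
    have e1 : 1 + ((n + 1 : ℕ) : ℝ) * P * 1 = x := by push_cast [hx_def]; ring
    have e2 : 1 + P * 1 * (((n + 1 : ℕ) : ℝ) - 1) = y := by push_cast [hy_def]; ring
    rw [e1, e2]
    have e3 : ((n + 1 : ℕ) : ℝ) = (n : ℝ) + 1 := by push_cast; ring
    rw [e3, sub_neg, div_mul_eq_mul_div, div_mul_eq_mul_div,
      div_lt_div_iff₀ (by norm_num) (by nlinarith)]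
    nlinarith [hlog]
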